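/- Let k ≥ 2 and let α ∈ Sₖ be a permutation fixing k whose number of descents is j−1 (where 1 ≤ j ≤ k−1). Then among the k permutations α, ατₖ, ατₖ², …, ατₖ^{k−1}, exactly j of them have j−1 descents and the remaining k−j of them have j descents. -/

import Mathlib

noncomputable section

/-- Number of descents of a permutation of `Fin n`. -/
def descents {n : ℕ} (σ : Equiv.Perm (Fin n)) : ℕ :=
  (Finset.univ.filter fun p : Fin n × Fin n =>
    (p.2 : ℕ) = (p.1 : ℕ) + 1 ∧ σ p.2 < σ p.1).card

/-- The `k`-cycle `τₖ` sending `1 ↦ k` and `i ↦ i-1` for `2 ≤ i ≤ k`. -/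
def tau (k : ℕ) : Equiv.Perm (Fin k) := (finRotate k)⁻¹

open scoped Fin.NatCast Fin.CommRing

namespace DesAux
open Finset

variable {n : ℕ}

/-- cyclic descent condition -/
def cd (σ : Equiv.Perm (Fin (n + 1))) (m : Fin (n + 1)) : Prop :=
  σ (finRotate (n + 1) m) < σ m

instance (σ : Equiv.Perm (Fin (n + 1))) : DecidablePred (cd σ) :=
  fun _ => inferInstanceAs (Decidable (_ < _))

/-- the set of cyclic descents -/
def CD (σ : Equiv.Perm (Fin (n + 1))) : Finset (Fin (n + 1)) :=
  Finset.univ.filter fun m => cd σ m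

lemma ne_last_of_pair {p : Fin (n+1) × Fin (n+1)} (h : (p.2 : ℕ) = (p.1 : ℕ) + 1) :
    p.1 ≠ Fin.last n := by
  intro hl
  have h2 := p.2.isLt
  have h1 : (p.1 : ℕ) = n := by rw [hl]; rfl
  omega

lemma finRotate_pair {p : Fin (n+1) × Fin (n+1)} (h : (p.2 : ℕ) = (p.1 : ℕ) + 1) :
    finRotate (n + 1) p.1 = p.2 :=
  Fin.ext (by rw [coe_finRotate_of_ne_last (ne_last_of_pair h), h])

lemma descents_eq (σ : Equiv.Perm (Fin (n + 1))) :
    descents σ =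
      (Finset.univ.filter fun m : Fin (n + 1) => m ≠ Fin.last n ∧ cd σ m).card := by
  unfold descents
  apply Finset.card_bij' (fun p _ => p.1) (fun m _ => (m, finRotate (n + 1) m))
  · intro p hp
    simp only [mem_filter, mem_univ, true_and] at hp ⊢
    refine ⟨ne_last_of_pair hp.1, ?_⟩
    unfold cd
    rw [finRotate_pair hp.1]; exact hp.2
  · intro m hm
    simp only [mem_filter, mem_univ, true_and] at hm ⊢
    exact ⟨coe_finRotate_of_ne_last hm.1, hm.2⟩
  · intro p hp
    simp only [mem_filter, mem_univ, true_and] at hp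
    exact Prod.ext rfl (finRotate_pair hp.1)
  · intro m _
    rfl

lemma descents_add_indicator (σ : Equiv.Perm (Fin (n + 1))) :
    descents σ + (if cd σ (Fin.last n) then 1 else 0) = (CD σ).card := by
  rw [descents_eq]
  by_cases h : cd σ (Fin.last n)
  · rw [if_pos h]
    have hins : CD σ = insert (Fin.last n)
        (Finset.univ.filter fun m : Fin (n + 1) => m ≠ Fin.last n ∧ cd σ m) := by
      ext m
      simp only [CD, mem_insert, mem_filter, mem_univ, true_and]
      by_cases hm : m = Fin.last n
      · subst hm; simp [h]
      · simp [hm]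
    rw [hins, card_insert_of_notMem (by simp)]
  · rw [if_neg h]
    have hs : CD σ = Finset.univ.filter fun m : Fin (n + 1) => m ≠ Fin.last n ∧ cd σ m := by
      ext m
      simp only [CD, mem_filter, mem_univ, true_and]
      by_cases hm : m = Fin.last n
      · subst hm; simp [h]
      · simp [hm]
    rw [hs, Nat.add_zero]

lemma cd_mul_tau_pow (σ : Equiv.Perm (Fin (n + 1))) (i : ℕ) (m : Fin (n + 1)) :
    cd (σ * tau (n + 1) ^ i) m ↔ cd σ (((tau (n + 1)) ^ i) m) := by
  have hcomm : tau (n+1) ^ i * finRotate (n+1) = finRotate (n+1) * tau (n+1) ^ i := by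
    unfold tau
    exact ((Commute.refl (finRotate (n+1))).inv_left.pow_left i)
  have h : (tau (n+1) ^ i) (finRotate (n+1) m)
      = finRotate (n+1) ((tau (n+1) ^ i) m) := by
    have h2 := congrArg (fun e : Equiv.Perm (Fin (n+1)) => e m) hcomm
    simpa only [Equiv.Perm.mul_apply] using h2
  unfold cd
  rw [Equiv.Perm.mul_apply, Equiv.Perm.mul_apply, h]

lemma card_CD_mul_tau_pow (σ : Equiv.Perm (Fin (n + 1))) (i : ℕ) :
    (CD (σ * tau (n + 1) ^ i)).card = (CD σ).card := by
  apply Finset.card_nbij (fun m => (tau (n+1) ^ i) m)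
  · intro m hm
    simp only [CD, Finset.coe_filter, Set.mem_setOf_eq, Finset.mem_coe, mem_filter, mem_univ, true_and] at hm ⊢
    exact (cd_mul_tau_pow σ i m).1 hm
  · intro a _ b _ hab
    exact (tau (n+1) ^ i).injective hab
  · intro m hm
    refine ⟨(tau (n+1) ^ i)⁻¹ m, ?_, by simp⟩
    simp only [CD, Finset.coe_filter, Set.mem_setOf_eq, Finset.mem_coe,
      mem_filter, mem_univ, true_and] at hm ⊢
    exact (cd_mul_tau_pow σ i _).2 (by simpa using hm)

lemma tau_pow_apply (i : ℕ) (m : Fin (n + 1)) :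
    (tau (n + 1) ^ i) m = m - (i : Fin (n+1)) := by
  induction i generalizing m with
  | zero => simp
  | succ i ih =>
    rw [pow_succ, Equiv.Perm.mul_apply]
    have htau : tau (n+1) m = m - 1 := by
      apply (finRotate (n+1)).injective
      show finRotate (n+1) ((finRotate (n+1))⁻¹ m) = _
      rw [Equiv.Perm.coe_inv, Equiv.apply_symm_apply, finRotate_succ_apply]
      ring
    rw [htau, ih]
    push_cast
    ring

end DesAux

open Finset DesAux in
/-- If `α ∈ Sₖ` fixes `k` and has `j-1` descents (`1 ≤ j ≤ k-1`), then among
`α, ατₖ, …, ατₖ^{k-1}` exactly `j` have `j-1` descents and the remaining `k-j`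
have `j` descents. -/
theorem descents_mul_tau_pow_count (k j : ℕ) (hk : 2 ≤ k) (hj1 : 1 ≤ j) (hj2 : j ≤ k - 1)
    (α : Equiv.Perm (Fin k))
    (hα : α ⟨k - 1, by omega⟩ = ⟨k - 1, by omega⟩)
    (hdes : descents α = j - 1) :
    ((Finset.range k).filter fun i => descents (α * tau k ^ i) = j - 1).card = j ∧
    ((Finset.range k).filter fun i => descents (α * tau k ^ i) = j).card = k - j := by
  obtain ⟨n, rfl⟩ : ∃ n, k = n + 1 := ⟨k - 1, by omega⟩
  have hn : 1 ≤ n := by omega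
  have hss : ∀ a b : Fin (n+1), a - (a - b) = b := fun a b => by ring
  have hlast : α (Fin.last n) = Fin.last n := by
    have h : (⟨n + 1 - 1, by omega⟩ : Fin (n+1)) = Fin.last n := rfl
    rwa [h] at hα
  have hcdlast : cd α (Fin.last n) := by
    unfold cd
    rw [finRotate_succ_apply, hlast]
    have h0 : Fin.last n + 1 = 0 := by
      apply Fin.ext
      simp [Fin.add_def, Fin.val_last]
    rw [h0]
    have hne : α 0 ≠ Fin.last n := by
      intro h
      have h2 := α.injective (h.trans hlast.symm)
      exact absurd h2 (by simp [Fin.ext_iff, Fin.val_last]; omega)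
    exact lt_of_le_of_ne (Fin.le_last _) hne
  have hCD : (CD α).card = j := by
    have h := descents_add_indicator α
    rw [hdes, if_pos hcdlast] at h
    omega
  have key : ∀ i, descents (α * tau (n+1) ^ i)
      = if (tau (n+1) ^ i) (Fin.last n) ∈ CD α then j - 1 else j := by
    intro i
    have h1 := descents_add_indicator (α * tau (n+1) ^ i)
    rw [card_CD_mul_tau_pow, hCD] at h1
    simp only [cd_mul_tau_pow] at h1
    by_cases h : (tau (n+1) ^ i) (Fin.last n) ∈ CD α
    · have hc : cd α ((tau (n+1) ^ i) (Fin.last n)) := by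
        simpa [CD] using h
      rw [if_pos h]
      rw [if_pos hc] at h1
      omega
    · have hc : ¬ cd α ((tau (n+1) ^ i) (Fin.last n)) := by
        simpa [CD] using h
      rw [if_neg h]
      rw [if_neg hc] at h1
      omega
  have hbij : ((Finset.range (n+1)).filter
      fun i => (tau (n+1) ^ i) (Fin.last n) ∈ CD α).card = (CD α).card := by
    apply Finset.card_nbij (fun i => (tau (n+1) ^ i) (Fin.last n))
    · intro i hi
      exact (mem_filter.1 hi).2
    · intro a ha b hb hab
      simp only [Finset.coe_filter, Set.mem_setOf_eq, Finset.mem_range] at ha hb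
      have hab' : (tau (n+1) ^ a) (Fin.last n) = (tau (n+1) ^ b) (Fin.last n) := hab
      rw [tau_pow_apply, tau_pow_apply] at hab'
      have hfin : (a : Fin (n+1)) = (b : Fin (n+1)) := by
        rw [← hss (Fin.last n) (a : Fin (n+1)), hab', hss]
      have := congrArg Fin.val hfin
      rwa [Fin.val_cast_of_lt ha.1, Fin.val_cast_of_lt hb.1] at this
    · intro m hm
      refine ⟨((Fin.last n - m : Fin (n+1)) : ℕ), ?_, ?_⟩
      · simp only [Finset.coe_filter, Set.mem_setOf_eq, Finset.mem_range]
        refine ⟨(Fin.last n - m).isLt, ?_⟩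
        have : (tau (n+1) ^ ((Fin.last n - m : Fin (n+1)) : ℕ)) (Fin.last n) = m := by
          rw [tau_pow_apply, Fin.cast_val_eq_self, hss]
        rw [this]
        simpa using hm
      · show (tau (n+1) ^ ((Fin.last n - m : Fin (n+1)) : ℕ)) (Fin.last n) = m
        rw [tau_pow_apply, Fin.cast_val_eq_self, hss]
  have hfilter1 : (Finset.range (n+1)).filter
      (fun i => descents (α * tau (n+1) ^ i) = j - 1)
      = (Finset.range (n+1)).filter
      (fun i => (tau (n+1) ^ i) (Fin.last n) ∈ CD α) := by
    apply Finset.filter_congr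
    intro i _
    rw [key i]
    by_cases h : (tau (n+1) ^ i) (Fin.last n) ∈ CD α
    · simp [h]
    · simp [h]; omega
  have hfilter2 : (Finset.range (n+1)).filter
      (fun i => descents (α * tau (n+1) ^ i) = j)
      = (Finset.range (n+1)).filter
      (fun i => ¬ ((tau (n+1) ^ i) (Fin.last n) ∈ CD α)) := by
    apply Finset.filter_congr
    intro i _
    rw [key i]
    by_cases h : (tau (n+1) ^ i) (Fin.last n) ∈ CD α
    · simp [h]; omega
    · simp [h]
  constructor
  · rw [hfilter1, hbij, hCD]
  · have htot : ((Finset.range (n+1)).filter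
        fun i => ¬ ((tau (n+1) ^ i) (Fin.last n) ∈ CD α)).card = n + 1 - j := by
      have h := Finset.card_filter_add_card_filter_not
        (s := Finset.range (n+1))
        (p := fun i => (tau (n+1) ^ i) (Fin.last n) ∈ CD α)
      rw [hbij, hCD, Finset.card_range] at h
      omega
    rw [hfilter2, htot]
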